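/- Let E be a Hausdorff topological vector space, V a dense linear subspace of E, and N a closed linear subspace of E of finite codimension. Then V ∩ N is dense in N. -/

import Mathlib

/-- Let `E` be a Hausdorff topological vector space (over `ℝ` or `ℂ`), `V` a dense linear
subspace of `E` and `N` a closed linear subspace of finite codimension. Then `V ∩ N` is
dense in `N`. -/
theorem dense_inter_of_finite_codim {𝕜 E : Type*} [RCLike 𝕜]
    [AddCommGroup E] [Module 𝕜 E] [TopologicalSpace E]
    [IsTopologicalAddGroup E] [ContinuousSMul 𝕜 E] [T2Space E]
    (V N : Submodule 𝕜 E) (hV : Dense (V : Set E)) (hN : IsClosed (N : Set E))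
    (hcodim : FiniteDimensional 𝕜 (E ⧸ N)) :
    (N : Set E) ⊆ closure ((V : Set E) ∩ (N : Set E)) := by
  haveI : IsClosed ((N : Set E)) := hN
  haveI : T3Space (E ⧸ N) := Submodule.t3_quotient_of_isClosed N
  have hcont : Continuous N.mkQ := continuous_quot_mk
  -- the image of V in E ⧸ N is dense, hence (the quotient being finite-dimensional) everything
  have hdense : Dense ((V.map N.mkQ : Submodule 𝕜 (E ⧸ N)) : Set (E ⧸ N)) := by
    have hs : DenseRange N.mkQ := (Submodule.mkQ_surjective N).denseRange
    simpa [Submodule.map_coe] using hs.dense_image hcont hV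
  have htop : V.map N.mkQ = ⊤ := by
    have hclosed : IsClosed ((V.map N.mkQ : Submodule 𝕜 (E ⧸ N)) : Set (E ⧸ N)) :=
      Submodule.closed_of_finiteDimensional _
    apply SetLike.coe_injective
    rw [Submodule.top_coe, ← hdense.closure_eq, hclosed.closure_eq]
  -- choose a basis of the quotient and lift it into V
  let b := Module.finBasis 𝕜 (E ⧸ N)
  have hlift : ∀ i, ∃ v : E, v ∈ V ∧ N.mkQ v = b i := by
    intro i
    have : b i ∈ V.map N.mkQ := htop ▸ Submodule.mem_top
    obtain ⟨v, hv, hv'⟩ := this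
    exact ⟨v, hv, hv'⟩
  choose v hvV hvq using hlift
  -- the section s : E ⧸ N →ₗ E, with range in V, is continuous
  let s : (E ⧸ N) →ₗ[𝕜] E := b.constr 𝕜 v
  have hscont : Continuous s := s.continuous_of_finiteDimensional
  have hsV : ∀ x, s x ∈ V := by
    intro x
    have : s x = ∑ i, b.repr x i • v i := by
      simp [s, Module.Basis.constr_apply_fintype, Module.Basis.equivFun_apply]
    rw [this]
    exact Submodule.sum_mem V fun i _ => Submodule.smul_mem V _ (hvV i)
  have hsec : ∀ x, N.mkQ (s x) = x := by
    have : N.mkQ ∘ₗ s = LinearMap.id := by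
      apply b.ext
      intro i
      simp [s, hvq i]
    intro x
    exact congrFun (congrArg (fun f => f.toFun) this) x
  -- the projection p = id - s ∘ mkQ
  let p : E →ₗ[𝕜] E := LinearMap.id - s ∘ₗ N.mkQ
  have hpcont : Continuous p := continuous_id.sub (hscont.comp hcont)
  have hpN : ∀ x, p x ∈ N := by
    intro x
    rw [← Submodule.Quotient.mk_eq_zero N]
    show N.mkQ (p x) = 0
    simp only [p, LinearMap.sub_apply, LinearMap.id_apply, LinearMap.comp_apply, map_sub,
      hsec, sub_self]
  have hpfix : ∀ x ∈ N, p x = x := by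
    intro x hx
    have : N.mkQ x = 0 := (Submodule.Quotient.mk_eq_zero N).2 hx
    simp [p, this]
  have hpV : ∀ x ∈ V, p x ∈ (V : Set E) ∩ (N : Set E) := by
    intro x hx
    exact ⟨Submodule.sub_mem V hx (hsV _), hpN x⟩
  -- conclude
  intro x hx
  have h1 : x = p x := (hpfix x hx).symm
  have h2 : x ∈ p '' closure (V : Set E) := by
    rw [hV.closure_eq]
    exact ⟨x, trivial, (hpfix x hx)⟩
  exact closure_mono (Set.image_subset_iff.2 hpV)
    (image_closure_subset_closure_image hpcont h2)
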